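/- For every n ≥ 1, the number of pairs (k, μ) where 1 ≤ k ≤ ⌊√n⌋ and μ is a partition of n − k² with at most k parts equals the number of partitions λ of n with λ_i − λ_{i+1} ≥ 2 for all i < ℓ(λ). -/

import Mathlib

private lemma sum_odd (k : ℕ) : ∑ j ∈ Finset.range k, (2 * j + 1) = k * k := by
  induction k with
  | zero => simp
  | succ k ih => rw [Finset.sum_range_succ, ih]; ring

private lemma sum_odd_c (k : ℕ) :
    ∑ i : Fin k, (2 * (k - 1 - (i : ℕ)) + 1) = k * k := by
  rw [← Finset.sum_range (fun i => 2 * (k - 1 - i) + 1)]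
  calc ∑ i ∈ Finset.range k, (2 * (k - 1 - i) + 1)
      = ∑ j ∈ Finset.range k, (2 * j + 1) := Finset.sum_range_reflect (fun j => 2 * j + 1) k
    _ = k * k := sum_odd k

private lemma gap_pair {m : ℕ} (f : Fin m → ℕ)
    (hgap : ∀ i : Fin m, ∀ h : (i : ℕ) + 1 < m, f ⟨(i : ℕ) + 1, h⟩ + 2 ≤ f i) :
    ∀ d : ℕ, ∀ i j : Fin m, (j : ℕ) = (i : ℕ) + d → f j + 2 * d ≤ f i := by
  intro d
  induction d with
  | zero =>
    intro i j h
    have : j = i := Fin.ext (by omega)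
    simp [this]
  | succ d ih =>
    intro i j h
    have hj : (j : ℕ) < m := j.isLt
    have hid : (i : ℕ) + d < m := by omega
    have hj2 : j = ⟨(i : ℕ) + d + 1, by omega⟩ := Fin.ext (show (j : ℕ) = (i : ℕ) + d + 1 by omega)
    have h2 : f j + 2 ≤ f ⟨(i : ℕ) + d, hid⟩ := by
      rw [hj2]
      exact hgap ⟨(i : ℕ) + d, hid⟩ (show (i : ℕ) + d + 1 < m by omega)
    have h3 := ih i ⟨(i : ℕ) + d, hid⟩ rfl
    omega

private lemma key_lb {m : ℕ} (f : Fin m → ℕ) (hpos : ∀ i, 1 ≤ f i)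
    (hgap : ∀ i : Fin m, ∀ h : (i : ℕ) + 1 < m, f ⟨(i : ℕ) + 1, h⟩ + 2 ≤ f i) :
    ∀ i : Fin m, 2 * (m - 1 - (i : ℕ)) + 1 ≤ f i := by
  intro i
  have hm : 0 < m := i.pos
  have hi := i.isLt
  let jl : Fin m := ⟨m - 1, by omega⟩
  have h1 := gap_pair f hgap (m - 1 - (i : ℕ)) i jl
    (show m - 1 = (i : ℕ) + (m - 1 - (i : ℕ)) by omega)
  have hp := hpos jl
  omega

theorem card_durfee_pairs_eq_card_gap_two_partitions (n : ℕ) (hn : 1 ≤ n) :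
    Nat.card {p : (k : ℕ) × (Fin k → ℕ) //
        1 ≤ p.1 ∧ p.1 * p.1 ≤ n ∧ Antitone p.2 ∧ ∑ i, p.2 i = n - p.1 * p.1}
      =
    Nat.card {q : (m : ℕ) × (Fin m → ℕ) //
        (∀ i, 1 ≤ q.2 i) ∧
        (∀ i : Fin q.1, ∀ h : (i : ℕ) + 1 < q.1, q.2 ⟨(i : ℕ) + 1, h⟩ + 2 ≤ q.2 i) ∧
        ∑ i, q.2 i = n} := by
  apply Nat.card_congr
  refine ⟨fun p => ⟨⟨p.1.1, fun i => p.1.2 i + (2 * (p.1.1 - 1 - (i : ℕ)) + 1)⟩, ?_, ?_, ?_⟩,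
    fun q => ⟨⟨q.1.1, fun i => q.1.2 i - (2 * (q.1.1 - 1 - (i : ℕ)) + 1)⟩, ?_, ?_, ?_, ?_⟩,
    ?_, ?_⟩
  · -- positivity
    intro i; dsimp only; omega
  · -- gap
    obtain ⟨⟨k, μ⟩, hk, hkn, hanti, hsum⟩ := p
    intro i h
    dsimp only at i h hanti ⊢
    have hle : i ≤ (⟨(i : ℕ) + 1, h⟩ : Fin k) := by
      rw [Fin.le_def]; exact Nat.le_succ _
    have h2 := hanti hle
    have hi := i.isLt
    omega
  · -- sum
    obtain ⟨⟨k, μ⟩, hk, hkn, hanti, hsum⟩ := p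
    dsimp only at hkn hsum ⊢
    rw [Finset.sum_add_distrib]; have := sum_odd_c k
    omega
  · -- 1 ≤ m
    obtain ⟨⟨m, f⟩, hpos, hgap, hsum⟩ := q
    dsimp only at hsum ⊢
    by_contra h
    have hm : m = 0 := by omega
    subst hm
    simp at hsum
    omega
  · -- m * m ≤ n
    obtain ⟨⟨m, f⟩, hpos, hgap, hsum⟩ := q
    dsimp only at hpos hgap hsum ⊢
    calc m * m = ∑ i : Fin m, (2 * (m - 1 - (i : ℕ)) + 1) := (sum_odd_c m).symm
    _ ≤ ∑ i, f i := Finset.sum_le_sum (fun i _ => key_lb f hpos hgap i)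
    _ = n := hsum
  · -- antitone
    obtain ⟨⟨m, f⟩, hpos, hgap, hsum⟩ := q
    dsimp only at hpos hgap hsum ⊢
    intro i j hij
    dsimp only
    have hij' : (i : ℕ) ≤ (j : ℕ) := hij
    have h1 := gap_pair f hgap ((j : ℕ) - (i : ℕ)) i j (by omega)
    have h2 := key_lb f hpos hgap j
    have h3 := key_lb f hpos hgap i
    have := j.isLt
    omega
  · -- sum
    obtain ⟨⟨m, f⟩, hpos, hgap, hsum⟩ := q
    dsimp only at hpos hgap hsum ⊢
    have hkey := key_lb f hpos hgap
    have h1 : ∑ i : Fin m, (f i - (2 * (m - 1 - (i : ℕ)) + 1))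
        + ∑ i : Fin m, (2 * (m - 1 - (i : ℕ)) + 1) = ∑ i, f i := by
      rw [← Finset.sum_add_distrib]
      exact Finset.sum_congr rfl (fun i _ => by have := hkey i; omega)
    rw [sum_odd_c, hsum] at h1
    have h2 : m * m ≤ n := by
      calc m * m = ∑ i : Fin m, (2 * (m - 1 - (i : ℕ)) + 1) := (sum_odd_c m).symm
      _ ≤ ∑ i, f i := Finset.sum_le_sum (fun i _ => hkey i)
      _ = n := hsum
    omega
  · -- left inverse
    rintro ⟨⟨k, μ⟩, hk, hkn, hanti, hsum⟩
    apply Subtype.ext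
    apply congrArg (Sigma.mk k)
    funext i
    dsimp only
    omega
  · -- right inverse
    rintro ⟨⟨m, f⟩, hpos, hgap, hsum⟩
    apply Subtype.ext
    apply congrArg (Sigma.mk m)
    funext i
    dsimp only at hpos hgap ⊢
    have := key_lb f hpos hgap i
    omega
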